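/- Measure-theoretic pigeonhole principle: Let (X, M, σ) be a measure space with σ(X) < ∞, let 0 < c, and let n ≥ 1. Then there exists N (depending on σ(X), c, n) such that for any measurable sets A_1, …, A_N with σ(A_i) ≥ c for all i, there exist indices i_1 < ⋯ < i_n with σ(A_{i_1} ∩ ⋯ ∩ A_{i_n}) > 0; in particular the intersection is nonempty. -/

import Mathlib

open MeasureTheory ENNReal

theorem measure_pigeonhole (X : Type*) [MeasurableSpace X] (σ : Measure X)
    [IsFiniteMeasure σ] (c : ℝ≥0∞) (hc : 0 < c) (n : ℕ) (hn : 1 ≤ n) :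
    ∃ N : ℕ, ∀ A : Fin N → Set X, (∀ i, MeasurableSet (A i)) → (∀ i, c ≤ σ (A i)) →
      ∃ t : Finset (Fin N), t.card = n ∧ 0 < σ (⋂ i ∈ t, A i) ∧ (⋂ i ∈ t, A i).Nonempty := by
  have hσfin : ((n-1 : ℕ) : ℝ≥0∞) * σ Set.univ ≠ ∞ := by finiteness
  obtain ⟨k, hk⟩ := ENNReal.exists_nat_gt (ENNReal.div_lt_top hσfin hc.ne').ne
  set N := max (k+1) n with hNdef
  have hNn : n ≤ N := le_max_right _ _
  have hNpos : 0 < N := lt_of_lt_of_le (Nat.succ_pos k) (le_max_left _ _)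
  have hkey : ((n-1:ℕ) : ℝ≥0∞) * σ Set.univ < N * c := by
    rcases eq_or_ne c ∞ with hcT | hcT
    · rw [hcT, ENNReal.mul_top (by exact_mod_cast hNpos.ne')]
      exact hσfin.lt_top
    · have h1 : ((n-1:ℕ) : ℝ≥0∞) * σ Set.univ < k * c := by
        rw [← ENNReal.div_lt_iff (Or.inl hc.ne') (Or.inl hcT)]
        exact hk
      refine h1.trans_le (mul_le_mul_left ?_ c)
      exact_mod_cast le_trans (Nat.le_succ k) (le_max_left _ _)
  refine ⟨N, fun A hA hAc => ?_⟩
  classical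
  set T : Finset (Finset (Fin N)) := Finset.univ.filter (fun t => t.card = n) with hT
  set E : Set X := ⋃ t ∈ T, ⋂ i ∈ t, A i with hE
  have hEm : MeasurableSet E := by
    refine MeasurableSet.biUnion T.countable_toSet fun t _ => ?_
    exact MeasurableSet.biInter t.countable_toSet fun i _ => hA i
  -- pointwise bound
  have hpt : ∀ x, (∑ i, (A i).indicator (1 : X → ℝ≥0∞) x)
      ≤ ((n-1:ℕ) : ℝ≥0∞) + (N : ℝ≥0∞) * E.indicator 1 x := by
    intro x
    have hsum : (∑ i, (A i).indicator (1 : X → ℝ≥0∞) x)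
        = ((Finset.univ.filter (fun i => x ∈ A i)).card : ℝ≥0∞) := by
      simp [Set.indicator_apply, Finset.sum_boole]
    rw [hsum]
    by_cases hx : x ∈ E
    · have hcard : (Finset.univ.filter (fun i => x ∈ A i)).card ≤ N := by
        simpa using Finset.card_filter_le Finset.univ (fun i => x ∈ A i)
      calc ((Finset.univ.filter (fun i => x ∈ A i)).card : ℝ≥0∞)
          ≤ (N : ℝ≥0∞) := by exact_mod_cast hcard
        _ ≤ ((n-1:ℕ) : ℝ≥0∞) + (N : ℝ≥0∞) * E.indicator 1 x := by
            simp [Set.indicator_of_mem hx]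
    · have hcard : (Finset.univ.filter (fun i => x ∈ A i)).card ≤ n - 1 := by
        by_contra h
        push_neg at h
        have hle : n ≤ (Finset.univ.filter (fun i => x ∈ A i)).card := by omega
        obtain ⟨t, hts, htc⟩ := Finset.exists_subset_card_eq hle
        apply hx
        refine Set.mem_biUnion (Finset.mem_filter.mpr ⟨Finset.mem_univ _, htc⟩) ?_
        refine Set.mem_biInter fun i hi => ?_
        exact (Finset.mem_filter.mp (hts hi)).2
      simp [Set.indicator_of_notMem hx]
      exact_mod_cast hcard
  -- integral inequality
  have hmeas : ∀ i : Fin N, Measurable ((A i).indicator (1 : X → ℝ≥0∞)) :=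
    fun i => measurable_const.indicator (hA i)
  have hint : (N : ℝ≥0∞) * c ≤ ((n-1:ℕ) : ℝ≥0∞) * σ Set.univ + (N : ℝ≥0∞) * σ E := by
    calc (N : ℝ≥0∞) * c = ∑ _i : Fin N, c := by
          simp [Finset.sum_const, mul_comm]
      _ ≤ ∑ i, σ (A i) := Finset.sum_le_sum fun i _ => hAc i
      _ = ∑ i, ∫⁻ x, (A i).indicator 1 x ∂σ := by
          simp [lintegral_indicator_one (hA _)]
      _ = ∫⁻ x, ∑ i, (A i).indicator 1 x ∂σ :=
          (lintegral_finset_sum _ fun i _ => hmeas i).symm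
      _ ≤ ∫⁻ x, (((n-1:ℕ) : ℝ≥0∞) + (N : ℝ≥0∞) * E.indicator 1 x) ∂σ :=
          lintegral_mono hpt
      _ = ((n-1:ℕ) : ℝ≥0∞) * σ Set.univ + (N : ℝ≥0∞) * σ E := by
          rw [lintegral_add_left measurable_const, lintegral_const]
          congr 1
          have h1 : ∀ a, (N : ℝ≥0∞) * E.indicator 1 a = E.indicator (fun _ => (N : ℝ≥0∞)) a := by
            intro a; by_cases h : a ∈ E <;> simp [h]
          simp_rw [h1]
          exact lintegral_indicator_const hEm _
  have hEpos : σ E ≠ 0 := by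
    intro h0
    rw [h0, mul_zero, add_zero] at hint
    exact absurd hint (not_le.mpr hkey)
  have hle : σ E ≤ ∑ t ∈ T, σ (⋂ i ∈ t, A i) := measure_biUnion_finset_le T _
  have : ∃ t ∈ T, σ (⋂ i ∈ t, A i) ≠ 0 := by
    by_contra h
    push_neg at h
    apply hEpos
    have : (∑ t ∈ T, σ (⋂ i ∈ t, A i)) = 0 := Finset.sum_eq_zero fun t ht => h t ht
    exact le_antisymm (this ▸ hle) zero_le
  obtain ⟨t, htT, ht0⟩ := this
  refine ⟨t, (Finset.mem_filter.mp htT).2, pos_iff_ne_zero.mpr ht0,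
    nonempty_of_measure_ne_zero ht0⟩
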